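/- For a fixed denominator-positivity domain, the uniform rational approximation error is a quasiconvex function of the coefficients: on a finite grid X = {x_1,...,x_N}, with basis functions given by monomials up to degrees m (numerator) and n (denominator), the function F(a, b) = max_i |f(x_i) − p_a(x_i)/q_b(x_i)|, restricted to the convex set of coefficients (a,b) with q_b(x_i) > 0 for all i, is quasiconvex; equivalently, all sublevel sets {(a,b) : F(a,b) ≤ t} are convex. -/
import Mathlib


open Finset

theorem uniform_rational_error_quasiconvex
    (m n N : ℕ) (hN : 0 < N) (x f : Fin N → ℝ) :
    QuasiconvexOn ℝ
      {ab : (Fin (m+1) → ℝ) × (Fin (n+1) → ℝ) |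
        ∀ i, 0 < ∑ k, ab.2 k * x i ^ (k : ℕ)}
      (fun ab =>
        (Finset.univ.sup' (Finset.univ_nonempty_iff.mpr ⟨⟨0, hN⟩⟩)
          (fun i : Fin N =>
            |f i - (∑ k, ab.1 k * x i ^ (k : ℕ)) / (∑ k, ab.2 k * x i ^ (k : ℕ))|))) := by
  have conv : ∀ (i : Fin N) (t p q : ℝ), 0 < q →
      (|f i - p / q| ≤ t ↔ |f i * q - p| ≤ t * q) := by
    intro i t p q hq
    rw [show f i - p / q = (f i * q - p) / q by field_simp, abs_div, abs_of_pos hq,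
      div_le_iff₀ hq]
  intro t
  rintro u ⟨huD, hut⟩ v ⟨hvD, hvt⟩ a b ha hb hab
  simp only [Set.mem_setOf_eq, Finset.sup'_le_iff, Finset.mem_univ, forall_true_left]
    at huD hvD hut hvt ⊢
  set w := a • u + b • v with hw
  have hqw : ∀ i, (∑ k, w.2 k * x i ^ (k : ℕ))
      = a * (∑ k, u.2 k * x i ^ (k : ℕ)) + b * (∑ k, v.2 k * x i ^ (k : ℕ)) := by
    intro i
    rw [Finset.mul_sum, Finset.mul_sum, ← Finset.sum_add_distrib]
    apply Finset.sum_congr rfl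
    intro k _
    simp only [hw, Prod.snd_add, Prod.smul_snd, Pi.add_apply, Pi.smul_apply, smul_eq_mul]
    ring
  have hpw : ∀ i, (∑ k, w.1 k * x i ^ (k : ℕ))
      = a * (∑ k, u.1 k * x i ^ (k : ℕ)) + b * (∑ k, v.1 k * x i ^ (k : ℕ)) := by
    intro i
    rw [Finset.mul_sum, Finset.mul_sum, ← Finset.sum_add_distrib]
    apply Finset.sum_congr rfl
    intro k _
    simp only [hw, Prod.fst_add, Prod.smul_fst, Pi.add_apply, Pi.smul_apply, smul_eq_mul]
    ring
  have hposw : ∀ i, 0 < ∑ k, w.2 k * x i ^ (k : ℕ) := by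
    intro i
    rw [hqw i]
    rcases lt_or_eq_of_le ha with h | h
    · nlinarith [mul_pos h (huD i), mul_nonneg hb (hvD i).le]
    · have hb1 : b = 1 := by linarith
      rw [← h, hb1]
      simpa using hvD i
  refine ⟨hposw, fun i => ?_⟩
  rw [conv i t _ _ (hposw i)]
  have hu' := (conv i t _ _ (huD i)).mp (hut i)
  have hv' := (conv i t _ _ (hvD i)).mp (hvt i)
  have key : f i * (∑ k, w.2 k * x i ^ (k : ℕ)) - (∑ k, w.1 k * x i ^ (k : ℕ))
      = a * (f i * (∑ k, u.2 k * x i ^ (k : ℕ)) - (∑ k, u.1 k * x i ^ (k : ℕ)))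
      + b * (f i * (∑ k, v.2 k * x i ^ (k : ℕ)) - (∑ k, v.1 k * x i ^ (k : ℕ))) := by
    rw [hqw i, hpw i]; ring
  calc |f i * (∑ k, w.2 k * x i ^ (k : ℕ)) - (∑ k, w.1 k * x i ^ (k : ℕ))|
      ≤ a * |f i * (∑ k, u.2 k * x i ^ (k : ℕ)) - (∑ k, u.1 k * x i ^ (k : ℕ))|
      + b * |f i * (∑ k, v.2 k * x i ^ (k : ℕ)) - (∑ k, v.1 k * x i ^ (k : ℕ))| := by
        rw [key]
        refine (abs_add_le _ _).trans ?_
        rw [abs_mul, abs_mul, abs_of_nonneg ha, abs_of_nonneg hb]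
    _ ≤ a * (t * (∑ k, u.2 k * x i ^ (k : ℕ))) + b * (t * (∑ k, v.2 k * x i ^ (k : ℕ))) := by
        gcongr
    _ = t * (∑ k, w.2 k * x i ^ (k : ℕ)) := by rw [hqw i]; ring
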